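/- Let f(x,θ) = n e^{−n(x−θ)} and g(x,θ) = n²(x−θ) e^{−n(x−θ)} for x ≥ θ. Then g(·,θ) is a probability density, λ(θ) := ∫_θ^∞ (x − 1/n) g(x,θ) dx = θ + 1/n, N(θ) := ∫_θ^∞ (∂_θ g(x,θ))²/f(x,θ) dx = n², and (λ′(θ))²/N(θ) = 1/n² = Var_{f_θ}(X − 1/n). -/

import Mathlib

open MeasureTheory Real

private theorem shiftInt (F : ℝ → ℝ) (θ : ℝ) :
    ∫ x in Set.Ioi θ, F (x - θ) = ∫ y in Set.Ioi (0:ℝ), F y := by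
  have := MeasureTheory.MeasurePreserving.setIntegral_image_emb
    (measurePreserving_add_right (volume : Measure ℝ) θ)
    (measurableEmbedding_addRight θ) (fun x => F (x - θ)) (Set.Ioi 0)
  simpa using this

private theorem intOn (c : ℝ) (hc : 0 < c) (k : ℕ) :
    IntegrableOn (fun x => x ^ k * Real.exp (-(c * x))) (Set.Ioi (0:ℝ)) := by
  have h := integrableOn_rpow_mul_exp_neg_mul_rpow (p := 1) (s := (k:ℝ)) (b := c)
    (by exact lt_of_lt_of_le neg_one_lt_zero (Nat.cast_nonneg k)) zero_lt_one hc
  refine h.congr_fun (fun x hx => ?_) measurableSet_Ioi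
  dsimp only
  rw [Real.rpow_one, Real.rpow_natCast, neg_mul]

private theorem gammaInt (c : ℝ) (hc : 0 < c) (k : ℕ) :
    ∫ x in Set.Ioi (0:ℝ), x ^ k * Real.exp (-(c * x)) = (k.factorial : ℝ) / c ^ (k + 1) := by
  have h := Real.integral_rpow_mul_exp_neg_mul_Ioi (a := (k : ℝ) + 1) (r := c)
    (by positivity) hc
  rw [setIntegral_congr_fun measurableSet_Ioi
      (fun x hx => by
        rw [show ((k:ℝ) + 1 - 1) = (k:ℝ) by ring, Real.rpow_natCast])] at h
  rw [h, Real.Gamma_nat_eq_factorial,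
    show ((k:ℝ) + 1) = ((k+1:ℕ):ℝ) by push_cast; ring, Real.rpow_natCast,
    div_pow, one_pow]
  ring

private theorem quadInt (r a b c : ℝ) (hr : 0 < r) :
    ∫ x in Set.Ioi (0:ℝ), (a * x ^ 2 + b * x + c) * Real.exp (-(r * x))
      = 2 * a / r ^ 3 + b / r ^ 2 + c / r := by
  rw [setIntegral_congr_fun measurableSet_Ioi
      (fun x _ => show (a * x ^ 2 + b * x + c) * Real.exp (-(r * x))
        = a * (x ^ 2 * Real.exp (-(r * x))) + (b * (x ^ 1 * Real.exp (-(r * x)))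
          + c * (x ^ 0 * Real.exp (-(r * x)))) by ring)]
  have h23 : IntegrableOn (fun x => b * (x ^ 1 * Real.exp (-(r * x)))
      + c * (x ^ 0 * Real.exp (-(r * x)))) (Set.Ioi (0:ℝ)) :=
    ((intOn r hr 1).const_mul b).add ((intOn r hr 0).const_mul c)
  rw [integral_add ((intOn r hr 2).const_mul a) h23,
    integral_add ((intOn r hr 1).const_mul b) ((intOn r hr 0).const_mul c),
    integral_const_mul, integral_const_mul, integral_const_mul,
    gammaInt r hr 2, gammaInt r hr 1, gammaInt r hr 0]
  simp [Nat.factorial]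
  ring

/-- Naudts's generalized Cramér–Rao bound is attained for the shifted-exponential-minimum
model: with `f(x,θ) = n e^{−n(x−θ)}` and escort `g(x,θ) = n²(x−θ)e^{−n(x−θ)}` on `[θ,∞)`,
`g` is a density, `λ(θ) = θ + 1/n`, `N(θ) = n²`, and
`(λ′(θ))²/N(θ) = 1/n² = Var_{f_θ}(X − 1/n)`. -/
theorem shifted_exponential_naudts_bound_attained
    (n : ℕ) (hn : 1 ≤ n) (θ : ℝ) (hθ : 0 < θ)
    (f g : ℝ → ℝ → ℝ)
    (hf : ∀ x t, f x t = (n : ℝ) * Real.exp (-((n : ℝ) * (x - t))))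
    (hg : ∀ x t, g x t = (n : ℝ) ^ 2 * (x - t) * Real.exp (-((n : ℝ) * (x - t)))) :
    (∫ x in Set.Ioi θ, g x θ) = 1 ∧
    (∫ x in Set.Ioi θ, (x - 1 / (n : ℝ)) * g x θ) = θ + 1 / (n : ℝ) ∧
    (∫ x in Set.Ioi θ, (deriv (fun t => g x t) θ) ^ 2 / f x θ) = (n : ℝ) ^ 2 ∧
    (deriv (fun t => t + 1 / (n : ℝ)) θ) ^ 2 / (n : ℝ) ^ 2 = 1 / (n : ℝ) ^ 2 ∧
    (1 : ℝ) / (n : ℝ) ^ 2 = ∫ x in Set.Ioi θ, (x - 1 / (n : ℝ) - θ) ^ 2 * f x θ := by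
  have hn0 : 0 < n := hn
  have hn' : (0:ℝ) < (n:ℝ) := by exact_mod_cast hn0
  have key : ∀ (a b c : ℝ) (G : ℝ → ℝ),
      (∀ x ∈ Set.Ioi θ, G x = (a*(x-θ)^2 + b*(x-θ) + c) * Real.exp (-((n:ℝ)*(x-θ)))) →
      ∫ x in Set.Ioi θ, G x = 2*a/(n:ℝ)^3 + b/(n:ℝ)^2 + c/(n:ℝ) := by
    intro a b c G hG
    rw [setIntegral_congr_fun measurableSet_Ioi hG]
    exact (shiftInt (fun y => (a*y^2 + b*y + c) * Real.exp (-((n:ℝ)*y))) θ).trans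
      (quadInt (n:ℝ) a b c hn')
  have hd : ∀ x : ℝ, deriv (fun t => g x t) θ
      = (n:ℝ)^2 * Real.exp (-((n:ℝ)*(x-θ))) * ((n:ℝ)*(x-θ) - 1) := by
    intro x
    have h1 : HasDerivAt (fun t : ℝ => x - t) (-1) θ := by
      simpa using (hasDerivAt_id θ).const_sub x
    have h3 : HasDerivAt (fun t : ℝ => Real.exp (-((n:ℝ)*(x-t))))
        (Real.exp (-((n:ℝ)*(x-θ))) * (-((n:ℝ) * (-1)))) θ :=
      ((h1.const_mul ((n:ℝ))).neg).exp
    have h4 := (h1.const_mul ((n:ℝ)^2)).mul h3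
    have h5 : HasDerivAt (fun t => g x t)
        ((n:ℝ)^2 * Real.exp (-((n:ℝ)*(x-θ))) * ((n:ℝ)*(x-θ) - 1)) θ := by
      have e : (fun t => g x t) = ((fun y => (n:ℝ)^2 * (x - y)) * fun t => Real.exp (-((n:ℝ)*(x-t)))) := by
        funext t; rw [hg]; rfl
      rw [e]; exact h4.congr_deriv (by ring)
    exact h5.deriv
  refine ⟨?_, ?_, ?_, ?_, ?_⟩
  · rw [key 0 ((n:ℝ)^2) 0 _ (fun x _ => by rw [hg]; ring)]
    field_simp
    ring
  · rw [key ((n:ℝ)^2) ((θ - 1/(n:ℝ))*(n:ℝ)^2) 0 _ (fun x _ => by rw [hg]; ring)]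
    field_simp
    ring
  · rw [key ((n:ℝ)^5) (-2*(n:ℝ)^4) ((n:ℝ)^3) _ (fun x _ => by
      rw [hd x, hf x θ]
      have he := Real.exp_pos (-((n:ℝ)*(x-θ)))
      field_simp
      ring)]
    field_simp
    ring
  · have : deriv (fun t : ℝ => t + 1/(n:ℝ)) θ = 1 := by
      simpa using ((hasDerivAt_id θ).add_const (1/(n:ℝ))).deriv
    rw [this]; ring
  · rw [(key ((n:ℝ)) (-2) (1/(n:ℝ)) _ (fun x _ => by rw [hf]; field_simp; ring)).symm.symm]
    field_simp
    ring
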